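/- arXiv:2203.08358 — 2 statements merged into one kernel-verified Lean document; each statement's English description precedes it below -/
import Mathlib

section
/- Let d ≥ 1 and let p, q be real numbers with 0 ≤ p ≤ 2q. There exists a constant c = c(p,q) > 0 such that for every τ > 0 and every measurable function g : ℝ^d → ℂ, one has ∫_{ℝ^d} |ξ|^{2q} |g(ξ)|² dξ ≤ c · τ^{p−2q} · ( ∫_{ℝ^d} |g(ξ)|² dξ )^{1/2} · ( ∫_{ℝ^d} |ξ|^{2p} e^{2τ|ξ|} |g(ξ)|² dξ )^{1/2}, where all integrals are Lebesgue integrals with values in [0,∞]. (Via Plancherel with g = 𝓕u, this is the Oliver–Titi inequality ‖Λ^q u‖_{L²}² ≤ c τ^{p−2q} ‖u‖_{L²} ‖Λ^p e^{τΛ} u‖_{L²}.) -/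
open MeasureTheory Real
open scoped ENNReal

/-- `t^s ≤ (1 + ⌈s⌉!) e^{2t}` for `t, s ≥ 0`. -/
lemma aux_rpow_le_exp {s t : ℝ} (hs : 0 ≤ s) (ht : 0 ≤ t) :
    t ^ s ≤ (1 + (Nat.ceil s).factorial : ℝ) * Real.exp (2 * t) := by
  have hfac : (1 : ℝ) ≤ ((Nat.ceil s).factorial : ℝ) := by
    exact_mod_cast Nat.one_le_iff_ne_zero.mpr (Nat.factorial_pos _).ne'
  have hexp1 : (1 : ℝ) ≤ Real.exp (2 * t) := Real.one_le_exp (by linarith)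
  rcases le_or_gt t 1 with h1 | h1
  · have : t ^ s ≤ 1 := Real.rpow_le_one ht h1 hs
    nlinarith [Real.exp_pos (2 * t)]
  · have h2 : t ^ s ≤ t ^ ((Nat.ceil s : ℕ) : ℝ) :=
      Real.rpow_le_rpow_of_exponent_le h1.le (Nat.le_ceil s)
    rw [Real.rpow_natCast] at h2
    have h3 : t ^ (Nat.ceil s) / ((Nat.ceil s).factorial : ℝ) ≤ Real.exp t :=
      Real.pow_div_factorial_le_exp t ht _
    have h4 : Real.exp t ≤ Real.exp (2 * t) := Real.exp_le_exp.mpr (by linarith)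
    have h5 : t ^ (Nat.ceil s) ≤ ((Nat.ceil s).factorial : ℝ) * Real.exp (2 * t) := by
      rw [div_le_iff₀ (by positivity)] at h3
      nlinarith [Real.exp_pos (2 * t)]
    nlinarith [Real.exp_pos (2 * t)]

/-- Frequency-side Oliver–Titi inequality: for `0 ≤ p ≤ 2q` there is
`c = c(p,q) > 0` with
`∫ |ξ|^{2q}|g|² ≤ c τ^{p−2q} (∫|g|²)^{1/2} (∫ |ξ|^{2p} e^{2τ|ξ|}|g|²)^{1/2}`
for every `τ > 0` and measurable `g`, all integrals taken in `[0,∞]`. -/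
theorem oliver_titi_frequency_inequality (d : ℕ) (hd : 1 ≤ d) (p q : ℝ)
    (hp : 0 ≤ p) (hpq : p ≤ 2 * q) :
    ∃ c : ℝ, 0 < c ∧ ∀ τ : ℝ, 0 < τ →
      ∀ g : EuclideanSpace ℝ (Fin d) → ℂ, Measurable g →
        (∫⁻ ξ : EuclideanSpace ℝ (Fin d),
            ENNReal.ofReal (‖ξ‖ ^ (2 * q) * ‖g ξ‖ ^ 2))
          ≤ ENNReal.ofReal (c * τ ^ (p - 2 * q))
            * (∫⁻ ξ : EuclideanSpace ℝ (Fin d),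
                ENNReal.ofReal (‖g ξ‖ ^ 2)) ^ (1 / 2 : ℝ)
            * (∫⁻ ξ : EuclideanSpace ℝ (Fin d),
                ENNReal.ofReal
                  (‖ξ‖ ^ (2 * p) * Real.exp (2 * τ * ‖ξ‖) * ‖g ξ‖ ^ 2))
                ^ (1 / 2 : ℝ) := by
  set s : ℝ := 4 * q - 2 * p with hs_def
  have hs : 0 ≤ s := by simp [hs_def]; linarith
  set C : ℝ := 1 + (Nat.ceil s).factorial with hC_def
  have hC : 0 < C := by positivity
  refine ⟨C ^ (1/2 : ℝ), Real.rpow_pos_of_pos hC _, fun τ hτ g hg => ?_⟩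
  set f : EuclideanSpace ℝ (Fin d) → ℝ≥0∞ := fun ξ => ENNReal.ofReal (‖g ξ‖)
  set h : EuclideanSpace ℝ (Fin d) → ℝ≥0∞ :=
    fun ξ => ENNReal.ofReal (‖ξ‖ ^ (2 * q) * ‖g ξ‖)
  have hf : AEMeasurable f := hg.norm.ennreal_ofReal.aemeasurable
  have hh : AEMeasurable h := by
    apply Measurable.aemeasurable
    apply Measurable.ennreal_ofReal
    exact (measurable_norm.pow_const _).mul hg.norm
  -- Cauchy–Schwarz
  have hconj : (2:ℝ).HolderConjugate 2 := Real.HolderConjugate.two_two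
  have hCS := ENNReal.lintegral_mul_le_Lp_mul_Lq volume hconj hf hh
  have hfg : ∀ ξ : EuclideanSpace ℝ (Fin d),
      ENNReal.ofReal (‖ξ‖ ^ (2 * q) * ‖g ξ‖ ^ 2) = (f * h) ξ := by
    intro ξ
    simp only [Pi.mul_apply, f, h]
    rw [← ENNReal.ofReal_mul (norm_nonneg _)]
    ring_nf
  have hf2 : ∀ ξ : EuclideanSpace ℝ (Fin d),
      f ξ ^ (2 : ℝ) = ENNReal.ofReal (‖g ξ‖ ^ 2) := by
    intro ξ
    rw [show (2:ℝ) = ((2:ℕ):ℝ) by norm_num, ENNReal.rpow_natCast,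
      ← ENNReal.ofReal_pow (norm_nonneg _)]
  have hh2 : ∀ ξ : EuclideanSpace ℝ (Fin d),
      h ξ ^ (2 : ℝ) = ENNReal.ofReal (‖ξ‖ ^ (4 * q) * ‖g ξ‖ ^ 2) := by
    intro ξ
    rw [show (2:ℝ) = ((2:ℕ):ℝ) by norm_num, ENNReal.rpow_natCast,
      ← ENNReal.ofReal_pow (by positivity)]
    congr 1
    rw [mul_pow, ← Real.rpow_natCast (‖ξ‖ ^ (2 * q)) 2, ← Real.rpow_mul (norm_nonneg _),
      show (2 * q * (2:ℕ) : ℝ) = 4 * q by push_cast; ring]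
  simp only [hfg]
  simp only [hf2, hh2] at hCS
  refine hCS.trans ?_
  -- Now bound the second factor
  have key : ∀ ξ : EuclideanSpace ℝ (Fin d),
      ENNReal.ofReal (‖ξ‖ ^ (4 * q) * ‖g ξ‖ ^ 2)
        ≤ ENNReal.ofReal (C * τ ^ (2 * (p - 2 * q)))
          * ENNReal.ofReal (‖ξ‖ ^ (2 * p) * Real.exp (2 * τ * ‖ξ‖)
              * ‖g ξ‖ ^ 2) := by
    intro ξ
    rw [← ENNReal.ofReal_mul (by positivity)]
    apply ENNReal.ofReal_le_ofReal
    have hnn : (0 : ℝ) ≤ ‖ξ‖ := norm_nonneg _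
    have h1 : (τ * ‖ξ‖) ^ s ≤ C * Real.exp (2 * (τ * ‖ξ‖)) := aux_rpow_le_exp hs (by positivity)
    rw [Real.mul_rpow hτ.le hnn] at h1
    have h2 : ‖ξ‖ ^ (4 * q) = ‖ξ‖ ^ (2 * p) * ‖ξ‖ ^ s := by
      rw [← Real.rpow_add_of_nonneg hnn (by linarith) hs]
      rw [hs_def]; ring_nf
    have hτs : 0 < τ ^ s := Real.rpow_pos_of_pos hτ _
    have hτinv : τ ^ (2 * (p - 2 * q)) = (τ ^ s)⁻¹ := by
      rw [← Real.rpow_neg hτ.le]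
      congr 1
      simp [hs_def]; ring
    have h3 : ‖ξ‖ ^ s ≤ C * τ ^ (2 * (p - 2 * q)) * Real.exp (2 * τ * ‖ξ‖) := by
      rw [hτinv]
      have hmul := mul_le_mul_of_nonneg_left h1 (le_of_lt (inv_pos.mpr hτs))
      calc ‖ξ‖ ^ s = (τ ^ s)⁻¹ * (τ ^ s * ‖ξ‖ ^ s) := by field_simp
        _ ≤ (τ ^ s)⁻¹ * (C * Real.exp (2 * (τ * ‖ξ‖))) := hmul
        _ = C * (τ ^ s)⁻¹ * Real.exp (2 * τ * ‖ξ‖) := by ring_nf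
    calc ‖ξ‖ ^ (4 * q) * ‖g ξ‖ ^ 2
        = ‖ξ‖ ^ (2 * p) * ‖ξ‖ ^ s * ‖g ξ‖ ^ 2 := by rw [h2]
      _ ≤ ‖ξ‖ ^ (2 * p) * (C * τ ^ (2 * (p - 2 * q)) * Real.exp (2 * τ * ‖ξ‖))
            * ‖g ξ‖ ^ 2 := by
          apply mul_le_mul_of_nonneg_right _ (by positivity)
          exact mul_le_mul_of_nonneg_left h3 (by positivity)
      _ = C * τ ^ (2 * (p - 2 * q))
            * (‖ξ‖ ^ (2 * p) * Real.exp (2 * τ * ‖ξ‖) * ‖g ξ‖ ^ 2) := by ring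
  have hint : (∫⁻ ξ : EuclideanSpace ℝ (Fin d),
        ENNReal.ofReal (‖ξ‖ ^ (4 * q) * ‖g ξ‖ ^ 2))
      ≤ ENNReal.ofReal (C * τ ^ (2 * (p - 2 * q)))
        * ∫⁻ ξ : EuclideanSpace ℝ (Fin d),
            ENNReal.ofReal (‖ξ‖ ^ (2 * p) * Real.exp (2 * τ * ‖ξ‖)
              * ‖g ξ‖ ^ 2) := by
    rw [← lintegral_const_mul' _ _ ENNReal.ofReal_ne_top]
    exact lintegral_mono key
  have hmono := ENNReal.rpow_le_rpow hint (by norm_num : (0:ℝ) ≤ 1/2)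
  rw [ENNReal.mul_rpow_of_nonneg _ _ (by norm_num : (0:ℝ) ≤ 1/2)] at hmono
  have hcoef : (ENNReal.ofReal (C * τ ^ (2 * (p - 2 * q)))) ^ (1/2 : ℝ)
      = ENNReal.ofReal (C ^ (1/2 : ℝ) * τ ^ (p - 2 * q)) := by
    rw [ENNReal.ofReal_rpow_of_nonneg (by positivity) (by norm_num)]
    congr 1
    rw [Real.mul_rpow hC.le (by positivity), ← Real.rpow_mul hτ.le]
    congr 2
    ring
  rw [hcoef] at hmono
  calc (∫⁻ ξ : EuclideanSpace ℝ (Fin d), ENNReal.ofReal (‖g ξ‖ ^ 2)) ^ (1/2 : ℝ)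
        * (∫⁻ ξ : EuclideanSpace ℝ (Fin d),
            ENNReal.ofReal (‖ξ‖ ^ (4 * q) * ‖g ξ‖ ^ 2)) ^ (1/2 : ℝ)
      ≤ (∫⁻ ξ : EuclideanSpace ℝ (Fin d), ENNReal.ofReal (‖g ξ‖ ^ 2)) ^ (1/2 : ℝ)
        * (ENNReal.ofReal (C ^ (1/2 : ℝ) * τ ^ (p - 2 * q))
          * (∫⁻ ξ : EuclideanSpace ℝ (Fin d),
              ENNReal.ofReal (‖ξ‖ ^ (2 * p) * Real.exp (2 * τ * ‖ξ‖)
                * ‖g ξ‖ ^ 2)) ^ (1/2 : ℝ)) :=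
        mul_le_mul_right hmono _
    _ = ENNReal.ofReal (C ^ (1/2 : ℝ) * τ ^ (p - 2 * q))
        * (∫⁻ ξ : EuclideanSpace ℝ (Fin d), ENNReal.ofReal (‖g ξ‖ ^ 2)) ^ (1/2 : ℝ)
        * (∫⁻ ξ : EuclideanSpace ℝ (Fin d),
            ENNReal.ofReal (‖ξ‖ ^ (2 * p) * Real.exp (2 * τ * ‖ξ‖)
              * ‖g ξ‖ ^ 2)) ^ (1/2 : ℝ) := by ring
end

section
/- Let d, n ≥ 1, let ν̄, κ̄, α ∈ ℝ with α² − ν̄ α + κ̄ = 0, and let A, M, G : ℝ × ℝ^d → ℝ^n be functions such that A and M are continuously differentiable in t and twice continuously differentiable in x. Suppose that for all (t,x): ∂_t A(t,x) + Δ M(t,x) = 0 and ∂_t M(t,x) − ν̄ Δ M(t,x) − κ̄ Δ A(t,x) = G(t,x), where Δ denotes the spatial Laplacian acting componentwise. Then the effective velocity W := M + α A satisfies ∂_t W(t,x) − (ν̄ − α) Δ W(t,x) = G(t,x) for all (t,x). -/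
open Real

noncomputable def spaceLaplacian {d : ℕ} {F : Type*} [NormedAddCommGroup F]
    [NormedSpace ℝ F] (f : EuclideanSpace ℝ (Fin d) → F)
    (x : EuclideanSpace ℝ (Fin d)) : F :=
  ∑ i : Fin d,
    fderiv ℝ (fun y => fderiv ℝ f y (EuclideanSpace.single i 1)) x
      (EuclideanSpace.single i 1)

lemma spaceLaplacian_add_smul {d : ℕ} {F : Type*} [NormedAddCommGroup F]
    [NormedSpace ℝ F] (f g : EuclideanSpace ℝ (Fin d) → F)
    (hf : ContDiff ℝ 2 f) (hg : ContDiff ℝ 2 g) (c : ℝ)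
    (x : EuclideanSpace ℝ (Fin d)) :
    spaceLaplacian (fun y => f y + c • g y) x
      = spaceLaplacian f x + c • spaceLaplacian g x := by
  have hf1 : ContDiff ℝ 1 (fderiv ℝ f) := hf.fderiv_right (by norm_num)
  have hg1 : ContDiff ℝ 1 (fderiv ℝ g) := hg.fderiv_right (by norm_num)
  have hdf : ∀ v, Differentiable ℝ (fun y => fderiv ℝ f y v) := fun v =>
    (hf1.differentiable one_ne_zero).clm_apply (differentiable_const v)
  have hdg : ∀ v, Differentiable ℝ (fun y => fderiv ℝ g y v) := fun v =>
    (hg1.differentiable one_ne_zero).clm_apply (differentiable_const v)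
  have key : ∀ v : EuclideanSpace ℝ (Fin d),
      (fun y => fderiv ℝ (fun z => f z + c • g z) y v)
        = fun y => fderiv ℝ f y v + c • fderiv ℝ g y v := by
    intro v
    funext y
    rw [(show HasFDerivAt (fun z => f z + c • g z) _ y from
      ((hf.differentiable (by norm_num)) y).hasFDerivAt.add
        (((hg.differentiable (by norm_num)) y).hasFDerivAt.const_smul c)).fderiv]
    simp
  unfold spaceLaplacian
  rw [Finset.smul_sum, ← Finset.sum_add_distrib]
  refine Finset.sum_congr rfl fun i _ => ?_
  rw [key (EuclideanSpace.single i 1),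
    (show HasFDerivAt (fun y => fderiv ℝ f y (EuclideanSpace.single i 1)
        + c • fderiv ℝ g y (EuclideanSpace.single i 1)) _ x from
      (hdf _ x).hasFDerivAt.add ((hdg _ x).hasFDerivAt.const_smul c)).fderiv]
  simp

/-- If `∂_t A + ΔM = 0` and `∂_t M − ν̄ΔM − κ̄ΔA = G` with
`α² − ν̄α + κ̄ = 0`, then the effective velocity `W = M + αA` solves the heat
equation `∂_t W − (ν̄−α)ΔW = G`. -/
theorem effective_velocity_heat_equation (d n : ℕ) (hd : 1 ≤ d) (hn : 1 ≤ n)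
    (ν κ α : ℝ) (hroot : α ^ 2 - ν * α + κ = 0)
    (A M G : ℝ → EuclideanSpace ℝ (Fin d) → EuclideanSpace ℝ (Fin n))
    (hAt : ∀ x, ContDiff ℝ 1 fun t => A t x)
    (hMt : ∀ x, ContDiff ℝ 1 fun t => M t x)
    (hAx : ∀ t, ContDiff ℝ 2 (A t))
    (hMx : ∀ t, ContDiff ℝ 2 (M t))
    (heq1 : ∀ t x, deriv (fun s => A s x) t + spaceLaplacian (M t) x = 0)
    (heq2 : ∀ t x,
      deriv (fun s => M s x) t - ν • spaceLaplacian (M t) x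
        - κ • spaceLaplacian (A t) x = G t x) :
    ∀ t x,
      deriv (fun s => M s x + α • A s x) t
        - (ν - α) • spaceLaplacian (fun y => M t y + α • A t y) x = G t x := by
  intro t x
  have hD : deriv (fun s => M s x + α • A s x) t
      = deriv (fun s => M s x) t + α • deriv (fun s => A s x) t := by
    exact (((hMt x).differentiable one_ne_zero t).hasDerivAt.add
      (((hAt x).differentiable one_ne_zero t).hasDerivAt.const_smul α)).deriv
  have hL := spaceLaplacian_add_smul (M t) (A t) (hMx t) (hAx t) α x
  rw [hD, hL]
  have h1 := heq1 t x
  have h2 := heq2 t x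
  have hdA : deriv (fun s => A s x) t = - spaceLaplacian (M t) x :=
    eq_neg_of_add_eq_zero_left h1
  rw [hdA, ← h2]
  match_scalars <;> linarith [hroot]
end
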